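/- The states |GHZ⟩ₙ and |Max⟩ₙ are Fourier duals of each other: (F ⊗ ⋯ ⊗ F) |Max⟩ₙ = |GHZ⟩ₙ and (F ⊗ ⋯ ⊗ F)⁻¹ |Max⟩ₙ = |GHZ⟩ₙ. -/

import Mathlib

/-- The 1-qudit Fourier matrix `F`, with `F e_k = d^{-1/2} ∑_ℓ q^{kℓ} e_ℓ`. -/
noncomputable def Fmat (d : ℕ) (q : ℂ) : Matrix (ZMod d) (ZMod d) ℂ :=
  Matrix.of fun l k => (Real.sqrt d : ℂ)⁻¹ * q ^ (k.val * l.val)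

/-- The `n`-fold tensor (Kronecker) power `F ⊗ ⋯ ⊗ F` acting on the `n`-qudit space. -/
noncomputable def tensF (d n : ℕ) (q : ℂ) :
    Matrix (Fin n → ZMod d) (Fin n → ZMod d) ℂ :=
  Matrix.of fun l k => ∏ j, Fmat d q (l j) (k j)

/-- The product basis vector `e_{\vec k}` of the `n`-qudit space. -/
noncomputable def ket (d n : ℕ) (k : Fin n → ZMod d) : (Fin n → ZMod d) → ℂ :=
  fun m => if m = k then 1 else 0

/-- The resource state `|Max⟩ₙ = d^{-(n-1)/2} ∑_{\vec ℓ : |\vec ℓ| = 0} e_{\vec ℓ}`. -/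
noncomputable def MaxState (d n : ℕ) [NeZero d] : (Fin n → ZMod d) → ℂ :=
  (Real.sqrt d : ℂ) ^ (1 - (n : ℤ)) •
    ∑ l ∈ Finset.univ.filter (fun l : Fin n → ZMod d => ∑ j, l j = 0), ket d n l

/-- The resource state `|GHZ⟩ₙ = d^{-1/2} ∑_{c ∈ ZMod d} e_{(c,c,…,c)}`. -/
noncomputable def GHZState (d n : ℕ) [NeZero d] : (Fin n → ZMod d) → ℂ :=
  (Real.sqrt d : ℂ)⁻¹ • ∑ c : ZMod d, ket d n (fun _ => c)

section Aux

variable {d : ℕ} [NeZero d] {ζ : ℂ}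

lemma s11_pow_mod (h1 : ζ ^ d = 1) (m : ℕ) : ζ ^ (m % d) = ζ ^ m := by
  conv_rhs => rw [← Nat.div_add_mod m d]
  rw [pow_add, pow_mul, h1, one_pow, one_mul]

lemma s11_psi_add (h1 : ζ ^ d = 1) (a b : ZMod d) :
    ζ ^ ((a + b).val) = ζ ^ a.val * ζ ^ b.val := by
  rw [ZMod.val_add, s11_pow_mod h1, pow_add]

lemma s11_psi_mul (h1 : ζ ^ d = 1) (a b : ZMod d) :
    ζ ^ (a.val * b.val) = ζ ^ ((a * b).val) := by
  rw [ZMod.val_mul, s11_pow_mod h1]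

lemma s11_psi_sum (h1 : ζ ^ d = 1) {ι : Type*} (s : Finset ι) (f : ι → ZMod d) :
    ζ ^ ((∑ j ∈ s, f j).val) = ∏ j ∈ s, ζ ^ ((f j).val) := by
  induction s using Finset.cons_induction with
  | empty => simp [ZMod.val_zero]
  | cons a s ha ih => rw [Finset.sum_cons, Finset.prod_cons, s11_psi_add h1, ih]

lemma s11_psi_neg (h1 : ζ ^ d = 1) (a : ZMod d) :
    ζ⁻¹ ^ a.val = ζ ^ ((-a).val) := by
  have h := s11_psi_add h1 a (-a)
  rw [add_neg_cancel, ZMod.val_zero, pow_zero] at h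
  rw [inv_pow]
  exact inv_eq_of_mul_eq_one_right h.symm

lemma s11_key_sum (hζ : IsPrimitiveRoot ζ d) (s : ZMod d) :
    ∑ k : ZMod d, ζ ^ ((k * s).val) = if s = 0 then (d : ℂ) else 0 := by
  have h1 := hζ.pow_eq_one
  split_ifs with hs
  · subst hs
    simp [ZMod.val_zero, Finset.card_univ, ZMod.card]
  · have hkey : ∀ k : ZMod d, ζ ^ ((k * s).val) = (ζ ^ s.val) ^ k.val := by
      intro k; rw [← s11_psi_mul h1, ← pow_mul, mul_comm]
    simp only [hkey]
    obtain ⟨m, rfl⟩ := Nat.exists_eq_succ_of_ne_zero (NeZero.ne d)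
    rw [show (∑ k : ZMod (m + 1), (ζ ^ s.val) ^ (k.val))
        = ∑ i ∈ Finset.range (m + 1), (ζ ^ s.val) ^ i from
      Fin.sum_univ_eq_sum_range _ _]
    have hx1 : ζ ^ s.val ≠ 1 := by
      refine hζ.pow_ne_one_of_pos_of_lt ?_ (ZMod.val_lt s)
      exact (fun h => hs (by rwa [← ZMod.val_eq_zero]))
    have := geom_sum_mul (ζ ^ s.val) (m + 1)
    rw [← pow_mul, mul_comm s.val, pow_mul, h1, one_pow, sub_self] at this
    rcases mul_eq_zero.mp this with h | h
    · exact h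
    · exact absurd (sub_eq_zero.mp h) hx1

lemma s11_charge_sum {n : ℕ} (hζ : IsPrimitiveRoot ζ d) (hn : 1 ≤ n) (l : Fin n → ZMod d) :
    ∑ k ∈ Finset.univ.filter (fun k : Fin n → ZMod d => ∑ j, k j = 0),
        ζ ^ ((∑ j, k j * l j).val)
      = (d : ℂ) ^ (n - 1) * ∑ a : ZMod d, (if l = fun _ => a then 1 else 0) := by
  have h1 := hζ.pow_eq_one
  have hd0 : (d : ℂ) ≠ 0 := Nat.cast_ne_zero.mpr (NeZero.ne d)
  rw [Finset.sum_filter]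
  have step1 : ∀ k : Fin n → ZMod d,
      (if ∑ j, k j = 0 then ζ ^ ((∑ j, k j * l j).val) else 0)
        = (d : ℂ)⁻¹ * ∑ c : ZMod d, ζ ^ ((∑ j, k j * (l j + c)).val) := by
    intro k
    have hc : ∀ c : ZMod d, ζ ^ ((∑ j, k j * (l j + c)).val)
        = ζ ^ ((c * ∑ j, k j).val) * ζ ^ ((∑ j, k j * l j).val) := by
      intro c
      have e : (c * ∑ j, k j) + (∑ j, k j * l j) = ∑ j, k j * (l j + c) := by
        rw [Finset.mul_sum, ← Finset.sum_add_distrib]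
        exact Finset.sum_congr rfl fun j _ => by ring
      rw [← s11_psi_add h1, e]
    simp only [hc]
    rw [← Finset.sum_mul, s11_key_sum hζ]
    split_ifs with h
    · field_simp
    · simp
  simp only [step1, ← Finset.mul_sum]
  rw [Finset.sum_comm]
  have step2 : ∀ c : ZMod d,
      (∑ k : Fin n → ZMod d, ζ ^ ((∑ j, k j * (l j + c)).val))
        = if l = (fun _ => -c) then (d : ℂ) ^ n else 0 := by
    intro c
    have hk : ∀ k : Fin n → ZMod d,
        ζ ^ ((∑ j, k j * (l j + c)).val) = ∏ j, ζ ^ ((k j * (l j + c)).val) :=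
      fun k => s11_psi_sum h1 _ _
    simp only [hk]
    rw [← Fintype.prod_sum (fun j (x : ZMod d) => ζ ^ ((x * (l j + c)).val))]
    have hj : ∀ j : Fin n,
        (∑ x : ZMod d, ζ ^ ((x * (l j + c)).val)) = if l j + c = 0 then (d : ℂ) else 0 :=
      fun j => s11_key_sum hζ _
    simp only [hj]
    rw [Fintype.prod_ite_zero]
    simp [funext_iff, add_eq_zero_iff_eq_neg, Finset.prod_const, Finset.card_univ]
  simp only [step2]
  rw [show (∑ c : ZMod d, if l = (fun _ => -c) then (d : ℂ) ^ n else 0)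
      = ∑ a : ZMod d, (if l = (fun _ => a) then (d : ℂ) ^ n else 0) from
    Fintype.sum_equiv (Equiv.neg (ZMod d)) _ _ (fun c => by simp [Equiv.neg_apply])]
  rw [Finset.mul_sum, Finset.mul_sum]
  refine Finset.sum_congr rfl fun a _ => ?_
  split_ifs
  · rw [mul_one, show n = n - 1 + 1 from (Nat.sub_add_cancel hn).symm]
    simp only [Nat.add_sub_cancel, pow_succ]
    field_simp
  · simp

lemma s11_MaxState_apply (d n : ℕ) [NeZero d] (k : Fin n → ZMod d) :
    MaxState d n k
      = (Real.sqrt d : ℂ) ^ (1 - (n : ℤ)) * (if ∑ j, k j = 0 then 1 else 0) := by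
  simp only [MaxState, Pi.smul_apply, smul_eq_mul, Finset.sum_apply, ket]
  congr 1
  simp [Finset.sum_ite_eq, Finset.mem_filter]

lemma s11_GHZState_apply (d n : ℕ) [NeZero d] (l : Fin n → ZMod d) :
    GHZState d n l
      = (Real.sqrt d : ℂ)⁻¹ * ∑ a : ZMod d, (if l = (fun _ => a) then 1 else 0) := by
  simp [GHZState, ket]

lemma s11_sqrt_ne_zero (d : ℕ) [NeZero d] : (Real.sqrt d : ℂ) ≠ 0 := by
  have : (0 : ℝ) < Real.sqrt d := Real.sqrt_pos.mpr
    (by exact_mod_cast Nat.pos_of_ne_zero (NeZero.ne d))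
  exact_mod_cast this.ne'

lemma s11_sqrt_mul_self (d : ℕ) [NeZero d] :
    (Real.sqrt d : ℂ) * (Real.sqrt d : ℂ) = (d : ℂ) := by
  rw [← Complex.ofReal_mul, Real.mul_self_sqrt (Nat.cast_nonneg d)]
  norm_num

lemma s11_forward {n : ℕ} (hζ : IsPrimitiveRoot ζ d) (hn : 1 ≤ n) :
    (tensF d n ζ).mulVec (MaxState d n) = GHZState d n := by
  have h1 := hζ.pow_eq_one
  have hc0 := s11_sqrt_ne_zero d
  have hc2 := s11_sqrt_mul_self d
  set c : ℂ := (Real.sqrt d : ℂ) with hc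
  funext l
  have htens : ∀ k : Fin n → ZMod d,
      tensF d n ζ l k = c⁻¹ ^ n * ζ ^ ((∑ j, k j * l j).val) := by
    intro k
    simp only [tensF, Fmat, Matrix.of_apply]
    rw [Finset.prod_mul_distrib, Finset.prod_const, Finset.card_univ, Fintype.card_fin,
      s11_psi_sum h1]
    congr 1
    exact Finset.prod_congr rfl fun j _ => by rw [s11_psi_mul h1]
  show ∑ k, tensF d n ζ l k * MaxState d n k = GHZState d n l
  have hstep : ∑ k, tensF d n ζ l k * MaxState d n k
      = c⁻¹ ^ n * c ^ (1 - (n : ℤ)) *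
        ∑ k ∈ Finset.univ.filter (fun k : Fin n → ZMod d => ∑ j, k j = 0),
          ζ ^ ((∑ j, k j * l j).val) := by
    rw [Finset.sum_filter, Finset.mul_sum]
    refine Finset.sum_congr rfl fun k _ => ?_
    rw [htens k, s11_MaxState_apply]
    split_ifs <;> ring
  rw [hstep, s11_charge_sum hζ hn l, s11_GHZState_apply]
  have hs : c⁻¹ ^ n * c ^ (1 - (n : ℤ)) * (d : ℂ) ^ (n - 1) = c⁻¹ := by
    have hd : (d : ℂ) ^ (n - 1) = c ^ ((2 * (n - 1) : ℕ) : ℤ) := by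
      rw [← hc2, ← sq, zpow_natCast, ← pow_mul]
    rw [hd, inv_pow, ← zpow_natCast c n, ← zpow_neg, ← zpow_add₀ hc0, ← zpow_add₀ hc0,
      show -(n : ℤ) + (1 - (n : ℤ)) + ((2 * (n - 1) : ℕ) : ℤ) = -1 by omega,
      zpow_neg_one]
  linear_combination (∑ a : ZMod d, (if l = (fun _ => a) then (1 : ℂ) else 0)) * hs

lemma s11_mul_inv {n : ℕ} (hζ : IsPrimitiveRoot ζ d) :
    tensF d n ζ * tensF d n ζ⁻¹ = 1 := by
  have h1 := hζ.pow_eq_one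
  have hinv1 : (ζ⁻¹) ^ d = 1 := by rw [inv_pow, h1, inv_one]
  have hc0 := s11_sqrt_ne_zero d
  have hc2 := s11_sqrt_mul_self d
  set c : ℂ := (Real.sqrt d : ℂ) with hc
  ext l m
  rw [Matrix.mul_apply]
  have hterm : ∀ k : Fin n → ZMod d,
      tensF d n ζ l k * tensF d n ζ⁻¹ k m
        = ∏ j, (c⁻¹ * c⁻¹ * ζ ^ ((k j * (l j - m j)).val)) := by
    intro k
    simp only [tensF, Fmat, Matrix.of_apply, ← Finset.prod_mul_distrib]
    refine Finset.prod_congr rfl fun j _ => ?_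
    rw [s11_psi_mul h1, s11_psi_mul hinv1, s11_psi_neg h1, mul_mul_mul_comm]
    congr 1
    rw [← s11_psi_add h1]
    congr 1
    ring
  simp only [hterm]
  rw [← Fintype.prod_sum (fun j (x : ZMod d) => c⁻¹ * c⁻¹ * ζ ^ ((x * (l j - m j)).val))]
  have hj : ∀ j : Fin n,
      (∑ x : ZMod d, c⁻¹ * c⁻¹ * ζ ^ ((x * (l j - m j)).val))
        = if l j = m j then (1 : ℂ) else 0 := by
    intro j
    rw [← Finset.mul_sum, s11_key_sum hζ]
    by_cases h : l j = m j
    · rw [if_pos (by rw [h, sub_self]), if_pos h, ← hc2]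
      field_simp
    · rw [if_neg (sub_ne_zero.mpr h), if_neg h, mul_zero]
  simp only [hj]
  rw [Fintype.prod_boole, Matrix.one_apply]
  simp [funext_iff]

end Aux

/-- `|GHZ⟩ₙ` and `|Max⟩ₙ` are Fourier duals of each other:
`(F ⊗ ⋯ ⊗ F) |Max⟩ₙ = |GHZ⟩ₙ` and `(F ⊗ ⋯ ⊗ F)⁻¹ |Max⟩ₙ = |GHZ⟩ₙ`. -/
theorem stmt_11 (d n : ℕ) [NeZero d] (hn : 1 ≤ n) (q : ℂ)
    (hq : q = Complex.exp (2 * Real.pi * Complex.I / d)) :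
    (tensF d n q).mulVec (MaxState d n) = GHZState d n ∧
    (tensF d n q)⁻¹.mulVec (MaxState d n) = GHZState d n := by
  have hζ : IsPrimitiveRoot q d := hq ▸ Complex.isPrimitiveRoot_exp d (NeZero.ne d)
  refine ⟨s11_forward hζ hn, ?_⟩
  rw [Matrix.inv_eq_right_inv (s11_mul_inv hζ)]
  exact s11_forward hζ.inv hn
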